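/- If G is a 4-connected graph of order n at least 8 that has no forest cut, and u is a vertex of G of degree 4, then at most two neighbors of u have degree 4. -/

import Mathlib

set_option linter.unusedSectionVars false
set_option linter.unusedVariables false
set_option maxHeartbeats 1000000


/-- `S` is a vertex cut of `G`: some two vertices outside of `S` lie in
different connected components of `G - S`. -/
def IsVertexCut {V : Type*} (G : SimpleGraph V) (S : Set V) : Prop :=
  ∃ a b : ↥(Sᶜ), ¬ (G.induce Sᶜ).Reachable a b

/-- A forest cut is a vertex cut whose induced subgraph is a forest. -/
def IsForestCut {V : Type*} (G : SimpleGraph V) (S : Set V) : Prop :=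
  IsVertexCut G S ∧ (G.induce S).IsAcyclic

/-- A graph is `k`-connected if it has more than `k` vertices and deleting any set of
fewer than `k` vertices leaves a connected graph. -/
def KConnected {V : Type*} [Fintype V] (k : ℕ) (G : SimpleGraph V) : Prop :=
  k < Fintype.card V ∧ ∀ S : Finset V, S.card < k → (G.induce (↑S : Set V)ᶜ).Connected


namespace ForestCutProof
open SimpleGraph Walk

variable {V : Type*} [Fintype V] [DecidableEq V] (G : SimpleGraph V) [DecidableRel G.Adj]

lemma walk_stay (A S : Finset V)
    (hclosed : ∀ x ∈ A, ∀ y : V, G.Adj x y → y ∈ A ∨ y ∈ S) :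
    ∀ (x y : ↥((↑S : Set V)ᶜ)) (w : (G.induce (↑S : Set V)ᶜ).Walk x y), (↑x : V) ∈ A → (↑y : V) ∈ A := by
  intro x y w
  induction w with
  | nil => exact id
  | @cons a b c h p ih =>
    intro hx
    apply ih
    have hadj : G.Adj ↑a ↑b := h
    rcases hclosed _ hx _ hadj with h' | h'
    · exact h'
    · exact absurd (Finset.mem_coe.2 h') b.2

lemma isVertexCut_of (A S : Finset V) (a z : V) (ha : a ∈ A) (haS : a ∉ S)
    (hzA : z ∉ A) (hzS : z ∉ S)
    (hclosed : ∀ x ∈ A, ∀ y : V, G.Adj x y → y ∈ A ∨ y ∈ S) :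
    IsVertexCut G (↑S : Set V) := by
  refine ⟨⟨a, by simpa using haS⟩, ⟨z, by simpa using hzS⟩, fun hr => ?_⟩
  obtain ⟨w⟩ := hr
  exact hzA (walk_stay G A S hclosed _ _ w ha)

lemma exists_outside (T : Finset V) (h : T.card < Fintype.card V) : ∃ z, z ∉ T := by
  by_contra hc
  push_neg at hc
  have : T = Finset.univ := Finset.eq_univ_iff_forall.2 hc
  rw [this, Finset.card_univ] at h
  omega

lemma no_small_cut (hconn : KConnected 4 G) (hn : 8 ≤ Fintype.card V) (A S : Finset V) (a : V)
    (ha : a ∈ A) (haS : a ∉ S)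
    (hclosed : ∀ x ∈ A, ∀ y : V, G.Adj x y → y ∈ A ∨ y ∈ S)
    (hcA : A.card ≤ 4) (hcS : S.card ≤ 3) : False := by
  obtain ⟨z, hz⟩ := exists_outside (A ∪ S) (by have := Finset.card_union_le A S; omega)
  obtain ⟨x, y, hxy⟩ := isVertexCut_of G A S a z ha haS
    (fun h => hz (Finset.mem_union_left _ h)) (fun h => hz (Finset.mem_union_right _ h)) hclosed
  exact hxy ((hconn.2 S (by omega)).preconnected x y)

lemma cut_nonacyclic (hnf : ¬ ∃ S : Set V, IsForestCut G S) (hn : 8 ≤ Fintype.card V)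
    (A S : Finset V) (a : V) (ha : a ∈ A) (haS : a ∉ S)
    (hclosed : ∀ x ∈ A, ∀ y : V, G.Adj x y → y ∈ A ∨ y ∈ S)
    (hsum : A.card + S.card ≤ 7) : ¬ (G.induce (↑S : Set V)).IsAcyclic := by
  intro hac
  obtain ⟨z, hz⟩ := exists_outside (A ∪ S) (by have := Finset.card_union_le A S; omega)
  exact hnf ⟨↑S, isVertexCut_of G A S a z ha haS
    (fun h => hz (Finset.mem_union_left _ h)) (fun h => hz (Finset.mem_union_right _ h)) hclosed,
    hac⟩


lemma card_le_three (a b c : V) : ({a, b, c} : Finset V).card ≤ 3 := by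
  refine le_trans (Finset.card_insert_le _ _) ?_
  exact Nat.succ_le_succ (le_trans (Finset.card_insert_le _ _) (by simp))

lemma card_le_four (a b c d : V) : ({a, b, c, d} : Finset V).card ≤ 4 :=
  le_trans (Finset.card_insert_le _ _) (Nat.succ_le_succ (card_le_three b c d))

lemma extract_two (s : Finset V) (hcard : s.card = 4) (a b : V) (ha : a ∈ s) (hb : b ∈ s)
    (hab : a ≠ b) :
    ∃ p q : V, s = {a, b, p, q} ∧ p ≠ q ∧ p ≠ a ∧ p ≠ b ∧ q ≠ a ∧ q ≠ b := by
  have hsub : ({a, b} : Finset V) ⊆ s := by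
    intro x hx; simp only [Finset.mem_insert, Finset.mem_singleton] at hx
    rcases hx with rfl | rfl <;> assumption
  have hcd : (s \ {a, b}).card = 2 := by
    rw [Finset.card_sdiff_of_subset hsub, hcard, Finset.card_insert_of_notMem (by simpa using hab),
      Finset.card_singleton]
  obtain ⟨p, q, hpq, hr⟩ := Finset.card_eq_two.1 hcd
  have hp : p ∈ s \ {a, b} := by rw [hr]; simp
  have hq : q ∈ s \ {a, b} := by rw [hr]; simp
  simp only [Finset.mem_sdiff, Finset.mem_insert, Finset.mem_singleton, not_or] at hp hq
  refine ⟨p, q, ?_, hpq, hp.2.1, hp.2.2, hq.2.1, hq.2.2⟩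
  apply Finset.Subset.antisymm
  · intro x hx
    by_cases hxa : x = a
    · simp [hxa]
    · by_cases hxb : x = b
      · simp [hxb]
      · have : x ∈ s \ {a, b} := by simp [hx, hxa, hxb]
        rw [hr] at this
        simp only [Finset.mem_insert, Finset.mem_singleton] at this
        simp [this]
  · intro x hx
    simp only [Finset.mem_insert, Finset.mem_singleton] at hx
    rcases hx with rfl | rfl | rfl | rfl
    · exact ha
    · exact hb
    · exact hp.1
    · exact hq.1

lemma extract_one (s : Finset V) (hcard : s.card = 4) (a b c : V) (ha : a ∈ s) (hb : b ∈ s)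
    (hc : c ∈ s) (hab : a ≠ b) (hac : a ≠ c) (hbc : b ≠ c) :
    ∃ d : V, s = {a, b, c, d} ∧ d ≠ a ∧ d ≠ b ∧ d ≠ c := by
  have hsub : ({a, b, c} : Finset V) ⊆ s := by
    intro x hx; simp only [Finset.mem_insert, Finset.mem_singleton] at hx
    rcases hx with rfl | rfl | rfl <;> assumption
  have hcd : (s \ {a, b, c}).card = 1 := by
    rw [Finset.card_sdiff_of_subset hsub, hcard, Finset.card_insert_of_notMem (by simp [hab, hac]),
      Finset.card_insert_of_notMem (by simpa using hbc), Finset.card_singleton]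
  obtain ⟨d, hr⟩ := Finset.card_eq_one.1 hcd
  have hd : d ∈ s \ {a, b, c} := by rw [hr]; simp
  simp only [Finset.mem_sdiff, Finset.mem_insert, Finset.mem_singleton, not_or] at hd
  refine ⟨d, ?_, hd.2.1, hd.2.2.1, hd.2.2.2⟩
  apply Finset.Subset.antisymm
  · intro x hx
    by_cases hxa : x = a
    · simp [hxa]
    · by_cases hxb : x = b
      · simp [hxb]
      · by_cases hxc : x = c
        · simp [hxc]
        · have : x ∈ s \ {a, b, c} := by simp [hx, hxa, hxb, hxc]
          rw [hr] at this
          simp only [Finset.mem_singleton] at this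
          simp [this]
  · intro x hx
    simp only [Finset.mem_insert, Finset.mem_singleton] at hx
    rcases hx with rfl | rfl | rfl | rfl
    · exact ha
    · exact hb
    · exact hc
    · exact hd.1


lemma cycle_struct (S : Finset V) (hS : S.card ≤ 4)
    (h : ¬ (G.induce (↑S : Set V)).IsAcyclic) :
    (∃ x y z : V, x ∈ S ∧ y ∈ S ∧ z ∈ S ∧ x ≠ y ∧ x ≠ z ∧ y ≠ z ∧
      G.Adj x y ∧ G.Adj x z ∧ G.Adj y z) ∨
    (∃ x y z w : V, x ∈ S ∧ y ∈ S ∧ z ∈ S ∧ w ∈ S ∧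
      x ≠ y ∧ x ≠ z ∧ x ≠ w ∧ y ≠ z ∧ y ≠ w ∧ z ≠ w ∧
      G.Adj x y ∧ G.Adj y z ∧ G.Adj z w ∧ G.Adj w x) := by
  simp only [SimpleGraph.IsAcyclic] at h
  push_neg at h
  obtain ⟨v0, c, hc⟩ := h
  have h3 : 3 ≤ c.length := hc.three_le_length
  have h4 : c.length ≤ 4 := by
    have hle := List.Nodup.length_le_card hc.support_nodup
    have hlen : c.support.tail.length = c.length := by
      simp [List.length_tail, SimpleGraph.Walk.length_support]
    have hcard : Fintype.card ↥(↑S : Set V) = S.card := by simp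
    rw [hlen, hcard] at hle
    omega
  cases c with
  | nil => simp at h3
  | cons h1 p1 =>
    cases p1 with
    | nil => simp at h3
    | cons h2 p2 =>
      cases p2 with
      | nil => simp at h3
      | cons hh3 p3 =>
        cases p3 with
        | nil =>
          -- triangle  v0 b1 b2
          rename_i b1 b2
          have hnd := hc.support_nodup
          simp [SimpleGraph.Walk.support_cons] at hnd
          refine Or.inl ⟨↑v0, ↑b1, ↑b2, ?_, ?_, ?_, ?_, ?_, ?_, ?_, ?_, ?_⟩
          · exact Finset.mem_coe.1 v0.2
          · exact Finset.mem_coe.1 b1.2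
          · exact Finset.mem_coe.1 b2.2
          · exact fun hE => hnd.1.2 (Subtype.ext hE.symm)
          · exact fun hE => hnd.2 (Subtype.ext hE.symm)
          · exact fun hE => hnd.1.1 (Subtype.ext hE)
          · exact h1
          · exact (hh3 : G.Adj _ _).symm
          · exact h2
        | cons hh4 p4 =>
          cases p4 with
          | nil =>
            rename_i b1 b2 b3
            have hnd := hc.support_nodup
            simp [SimpleGraph.Walk.support_cons] at hnd
            refine Or.inr ⟨↑v0, ↑b1, ↑b2, ↑b3, Finset.mem_coe.1 v0.2, Finset.mem_coe.1 b1.2,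
              Finset.mem_coe.1 b2.2, Finset.mem_coe.1 b3.2, ?_, ?_, ?_, ?_, ?_, ?_,
              h1, h2, hh3, hh4⟩
            · exact fun hE => hnd.1.2.2 (Subtype.ext hE.symm)
            · exact fun hE => hnd.2.1.2 (Subtype.ext hE.symm)
            · exact fun hE => hnd.2.2 (Subtype.ext hE.symm)
            · exact fun hE => hnd.1.1 (Subtype.ext hE)
            · exact fun hE => hnd.1.2.1 (Subtype.ext hE)
            · exact fun hE => hnd.2.1.1 (Subtype.ext hE)
          | cons h5 p5 =>
            exfalso
            simp [SimpleGraph.Walk.length_cons] at h4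
            omega

lemma exists_edge_avoiding (S : Finset V) (hS : S.card ≤ 4) (t : V)
    (h : ¬ (G.induce (↑S : Set V)).IsAcyclic) :
    ∃ x y : V, x ∈ S ∧ y ∈ S ∧ x ≠ t ∧ y ≠ t ∧ x ≠ y ∧ G.Adj x y := by
  rcases cycle_struct G S hS h with
    ⟨x, y, z, hx, hy, hz, hxy, hxz, hyz, axy, axz, ayz⟩ |
    ⟨x, y, z, w, hx, hy, hz, hw, hxy, hxz, hxw, hyz, hyw, hzw, axy, ayz, azw, awx⟩
  · by_cases hxt : x = t
    · exact ⟨y, z, hy, hz, fun hE => hxy (hxt ▸ hE ▸ rfl), fun hE => hxz (hxt ▸ hE ▸ rfl), hyz, ayz⟩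
    · by_cases hyt : y = t
      · exact ⟨x, z, hx, hz, hxt, fun hE => hyz (hyt ▸ hE ▸ rfl), hxz, axz⟩
      · exact ⟨x, y, hx, hy, hxt, hyt, hxy, axy⟩
  · by_cases hxt : x = t
    · exact ⟨y, z, hy, hz, fun hE => hxy (hxt ▸ hE ▸ rfl), fun hE => hxz (hxt ▸ hE ▸ rfl), hyz, ayz⟩
    · by_cases hyt : y = t
      · exact ⟨z, w, hz, hw, fun hE => hyz (hyt ▸ hE ▸ rfl), fun hE => hyw (hyt ▸ hE ▸ rfl), hzw, azw⟩
      · exact ⟨x, y, hx, hy, hxt, hyt, hxy, axy⟩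

lemma pendant_triangle (S : Finset V) (t p q r : V) (hSeq : S = {t, p, q, r})
    (htp : t ≠ p) (htq : t ≠ q) (htr : t ≠ r) (hpq : p ≠ q) (hpr : p ≠ r) (hqr : q ≠ r)
    (hnq : ¬ G.Adj t q) (hnr : ¬ G.Adj t r)
    (h : ¬ (G.induce (↑S : Set V)).IsAcyclic) :
    G.Adj p q ∧ G.Adj p r ∧ G.Adj q r := by
  have hS : S.card ≤ 4 := by
    subst hSeq
    refine le_trans (Finset.card_insert_le _ _) ?_
    refine Nat.succ_le_succ (le_trans (Finset.card_insert_le _ _) ?_)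
    exact Nat.succ_le_succ (le_trans (Finset.card_insert_le _ _) (by simp))
  have hmem : ∀ x ∈ S, x = t ∨ x = p ∨ x = q ∨ x = r := by
    intro x hx; rw [hSeq] at hx; simpa using hx
  have resolve : ∀ s : V, s = t ∨ s = p ∨ s = q ∨ s = r → s ≠ t → s = p ∨ s = q ∨ s = r :=
    fun s hs hst => hs.resolve_left hst
  -- a neighbor of t inside S other than t must be p
  have hnbr : ∀ x ∈ S, G.Adj t x → x = p := by
    intro x hx hax
    rcases hmem x hx with h1 | h1 | h1 | h1
    · exact absurd (h1 ▸ hax) (G.irrefl (v := t))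
    · exact h1
    · exact absurd (h1 ▸ hax) hnq
    · exact absurd (h1 ▸ hax) hnr
  rcases cycle_struct G S hS h with
    ⟨x, y, z, hx, hy, hz, hxy, hxz, hyz, axy, axz, ayz⟩ |
    ⟨x, y, z, w, hx, hy, hz, hw, hxy, hxz, hxw, hyz, hyw, hzw, axy, ayz, azw, awx⟩
  · -- triangle
    by_cases hxt : x = t
    · subst hxt
      have h1 := hnbr y hy axy
      have h2 := hnbr z hz axz
      exact absurd (h1.trans h2.symm) hyz
    · by_cases hyt : y = t
      · subst hyt
        have h1 := hnbr x hx axy.symm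
        have h2 := hnbr z hz ayz
        exact absurd (h1.trans h2.symm) hxz
      · by_cases hzt : z = t
        · subst hzt
          have h1 := hnbr x hx axz.symm
          have h2 := hnbr y hy ayz.symm
          exact absurd (h1.trans h2.symm) hxy
        · -- x, y, z ∈ {p, q, r}
          have cx := hmem x hx
          have cy := hmem y hy
          have cz := hmem z hz
          have hT : ({x, y, z} : Finset V) = {p, q, r} := by
            apply Finset.eq_of_subset_of_card_le
            · intro m hm
              simp only [Finset.mem_insert, Finset.mem_singleton] at hm ⊢
              rcases hm with rfl | rfl | rfl <;>
                first
                  | exact resolve _ cx hxt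
                  | exact resolve _ cy hyt
                  | exact resolve _ cz hzt
            · have : ({x, y, z} : Finset V).card = 3 := by
                rw [Finset.card_insert_of_notMem (by simp [hxy, hxz]),
                  Finset.card_insert_of_notMem (by simp [hyz])]
                simp
              rw [this]
              refine le_trans (Finset.card_insert_le _ _) ?_
              exact Nat.succ_le_succ (le_trans (Finset.card_insert_le _ _) (by simp))
          have hadj : ∀ m n : V, m ∈ ({x, y, z} : Finset V) → n ∈ ({x, y, z} : Finset V) →
              m ≠ n → G.Adj m n := by
            intro m n hm hn hmn
            simp only [Finset.mem_insert, Finset.mem_singleton] at hm hn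
            rcases hm with rfl | rfl | rfl <;> rcases hn with rfl | rfl | rfl <;>
              first
                | exact absurd rfl hmn
                | assumption
                | exact axy.symm
                | exact axz.symm
                | exact ayz.symm
          have hp : p ∈ ({x, y, z} : Finset V) := by rw [hT]; simp
          have hq : q ∈ ({x, y, z} : Finset V) := by rw [hT]; simp
          have hr : r ∈ ({x, y, z} : Finset V) := by rw [hT]; simp
          exact ⟨hadj p q hp hq hpq, hadj p r hp hr hpr, hadj q r hq hr hqr⟩
  · -- C4 case: t must be among x,y,z,w, with two distinct neighbors, both = p
    exfalso
    by_cases hxt : x = t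
    · subst hxt
      have h1 := hnbr y hy axy
      have h2 := hnbr w hw awx.symm
      exact hyw (h1.trans h2.symm)
    · by_cases hyt : y = t
      · subst hyt
        have h1 := hnbr x hx axy.symm
        have h2 := hnbr z hz ayz
        exact hxz (h1.trans h2.symm)
      · by_cases hzt : z = t
        · subst hzt
          have h1 := hnbr y hy ayz.symm
          have h2 := hnbr w hw azw
          exact hyw (h1.trans h2.symm)
        · by_cases hwt : w = t
          · subst hwt
            have h1 := hnbr z hz azw.symm
            have h2 := hnbr x hx awx
            exact hxz (h2.trans h1.symm)
          · -- four distinct vertices in {p,q,r}: impossible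
            have cx := hmem x hx
            have cy := hmem y hy
            have cz := hmem z hz
            have cw := hmem w hw
            have hsub : ({x, y, z, w} : Finset V) ⊆ {p, q, r} := by
              intro m hm
              simp only [Finset.mem_insert, Finset.mem_singleton] at hm ⊢
              rcases hm with rfl | rfl | rfl | rfl <;>
                first
                  | exact resolve _ cx hxt
                  | exact resolve _ cy hyt
                  | exact resolve _ cz hzt
                  | exact resolve _ cw hwt
            have hc4 : ({x, y, z, w} : Finset V).card = 4 := by
              rw [Finset.card_insert_of_notMem (by simp [hxy, hxz, hxw]),
                Finset.card_insert_of_notMem (by simp [hyz, hyw]),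
                Finset.card_insert_of_notMem (by simp [hzw])]
              simp
            have hc3 : ({p, q, r} : Finset V).card ≤ 3 := by
              refine le_trans (Finset.card_insert_le _ _) ?_
              exact Nat.succ_le_succ (le_trans (Finset.card_insert_le _ _) (by simp))
            have := Finset.card_le_card hsub
            omega


lemma deg4_card (v : V) (hd : G.degree v = 4) : (G.neighborFinset v).card = 4 := by
  rw [SimpleGraph.card_neighborFinset_eq_degree]; exact hd

lemma mem_quad_of_adj (v y p q r s : V) (hN : G.neighborFinset v = {p, q, r, s})
    (h : G.Adj v y) : y = p ∨ y = q ∨ y = r ∨ y = s := by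
  have hm : y ∈ G.neighborFinset v := (SimpleGraph.mem_neighborFinset _ _ _).2 h
  rw [hN] at hm
  simpa using hm

lemma adj_of_quad (v x p q r s : V) (hN : G.neighborFinset v = {p, q, r, s})
    (hx : x ∈ ({p, q, r, s} : Finset V)) : G.Adj v x := by
  have hm : x ∈ G.neighborFinset v := by rw [hN]; exact hx
  rwa [SimpleGraph.mem_neighborFinset] at hm

lemma not_adj_of_quad (v x p q r s : V) (hN : G.neighborFinset v = {p, q, r, s})
    (h1 : x ≠ p) (h2 : x ≠ q) (h3 : x ≠ r) (h4 : x ≠ s) : ¬ G.Adj v x := by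
  intro h
  rcases mem_quad_of_adj G v x p q r s hN h with rfl | rfl | rfl | rfl <;> simp_all

lemma quad_perm_swap34 (p q r s : V) : ({p, q, r, s} : Finset V) = {p, q, s, r} := by
  ext t
  simp only [Finset.mem_insert, Finset.mem_singleton]
  tauto


lemma card_le_two (a b : V) : ({a, b} : Finset V).card ≤ 2 :=
  le_trans (Finset.card_insert_le _ _) (by simp)

lemma card_eq_four (a b c d : V) (h1 : a ≠ b) (h2 : a ≠ c) (h3 : a ≠ d) (h4 : b ≠ c)
    (h5 : b ≠ d) (h6 : c ≠ d) : ({a, b, c, d} : Finset V).card = 4 := by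
  rw [Finset.card_insert_of_notMem (by simp [h1, h2, h3]),
    Finset.card_insert_of_notMem (by simp [h4, h5]),
    Finset.card_insert_of_notMem (by simp [h6]), Finset.card_singleton]

lemma stepB (hconn : KConnected 4 G) (hn : 8 ≤ Fintype.card V)
    (hnf : ¬ ∃ S : Set V, IsForestCut G S)
    (u a b c d : V) (hNu : G.neighborFinset u = {a, b, c, d})
    (hab : a ≠ b) (hac : a ≠ c) (had : a ≠ d) (hbc : b ≠ c) (hbd : b ≠ d) (hcd : c ≠ d)
    (hda : G.degree a = 4) (hdb : G.degree b = 4) (hAB : G.Adj a b) :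
    ∃ m x : V, G.neighborFinset a = {u, b, m, x} ∧ (m = c ∨ m = d) ∧
      x ≠ u ∧ x ≠ a ∧ x ≠ b ∧ x ≠ c ∧ x ≠ d := by
  have hua : G.Adj u a := adj_of_quad G u a a b c d hNu (by simp)
  have hub : G.Adj u b := adj_of_quad G u b a b c d hNu (by simp)
  have huc : G.Adj u c := adj_of_quad G u c a b c d hNu (by simp)
  have hud : G.Adj u d := adj_of_quad G u d a b c d hNu (by simp)
  have hau : a ≠ u := hua.ne'
  have hbu : b ≠ u := hub.ne'
  have hcu : c ≠ u := huc.ne'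
  have hdu : d ≠ u := hud.ne'
  have hNa4 := deg4_card G a hda
  have hNb4 := deg4_card G b hdb
  have hmu : u ∈ G.neighborFinset a := by rw [SimpleGraph.mem_neighborFinset]; exact hua.symm
  have hmb : b ∈ G.neighborFinset a := by rw [SimpleGraph.mem_neighborFinset]; exact hAB
  obtain ⟨p, q, hNa, hpq, hpu, hpb, hqu, hqb⟩ :=
    extract_two (G.neighborFinset a) hNa4 u b hmu hmb hub.ne
  have hpmem : p ∈ G.neighborFinset a := by rw [hNa]; simp
  have hqmem : q ∈ G.neighborFinset a := by rw [hNa]; simp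
  have hpa : p ≠ a := fun h => G.notMem_neighborFinset_self a (h ▸ hpmem)
  have hqa : q ≠ a := fun h => G.notMem_neighborFinset_self a (h ▸ hqmem)
  by_cases hp : p = c ∨ p = d
  · by_cases hq : q = c ∨ q = d
    · -- both p,q in {c,d} : N(a) ⊆ N[u] : 3-cut {b,c,d}
      exfalso
      have hNa' : G.neighborFinset a = {u, b, c, d} := by
        rcases hp with hp' | hp' <;> rcases hq with hq' | hq'
        · exact absurd (hp'.trans hq'.symm) hpq
        · rw [hNa, hp', hq']
        · rw [hNa, hp', hq']; exact quad_perm_swap34 u b d c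
        · exact absurd (hp'.trans hq'.symm) hpq
      refine no_small_cut G hconn hn {u, a} {b, c, d} u (by simp) (by simp [hbu.symm, hcu.symm, hdu.symm]) ?_ (le_trans (card_le_two u a) (by omega)) (card_le_three b c d)
      intro x hx y hady
      simp only [Finset.mem_insert, Finset.mem_singleton] at hx
      rcases hx with rfl | rfl
      · rcases mem_quad_of_adj G x y a b c d hNu hady with rfl | rfl | rfl | rfl <;> simp
      · rcases mem_quad_of_adj G x y u b c d hNa' hady with rfl | rfl | rfl | rfl <;> simp
    · push_neg at hq
      exact ⟨p, q, hNa, hp, hqu, hqa, hqb, hq.1, hq.2⟩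
  · by_cases hq : q = c ∨ q = d
    · push_neg at hp
      refine ⟨q, p, ?_, hq, hpu, hpa, hpb, hp.1, hp.2⟩
      rw [hNa]; exact quad_perm_swap34 u b p q
    · -- neither: contradiction
      exfalso
      push_neg at hp
      push_neg at hq
      have hnup : ¬ G.Adj u p := not_adj_of_quad G u p a b c d hNu hpa hpb hp.1 hp.2
      have hnuq : ¬ G.Adj u q := not_adj_of_quad G u q a b c d hNu hqa hqb hq.1 hq.2
      have hnac : ¬ (G.induce (↑(G.neighborFinset a) : Set V)).IsAcyclic := by
        refine cut_nonacyclic G hnf hn {a} (G.neighborFinset a) a (by simp)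
          (G.notMem_neighborFinset_self a) ?_ (by rw [hNa4]; simp)
        intro x hx y hady
        simp only [Finset.mem_singleton] at hx
        subst hx
        right
        rwa [SimpleGraph.mem_neighborFinset]
      have htri := pendant_triangle G (G.neighborFinset a) u b p q hNa hub.ne hpu.symm hqu.symm
        hpb.symm hqb.symm hpq hnup hnuq hnac
      -- N(b) = {u, a, p, q}
      have hsub : ({u, a, p, q} : Finset V) ⊆ G.neighborFinset b := by
        intro x hx
        simp only [Finset.mem_insert, Finset.mem_singleton] at hx
        rw [SimpleGraph.mem_neighborFinset]
        rcases hx with rfl | rfl | rfl | rfl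
        · exact hub.symm
        · exact hAB.symm
        · exact htri.1
        · exact htri.2.1
      have hNb : G.neighborFinset b = {u, a, p, q} :=
        (Finset.eq_of_subset_of_card_le hsub (by
          rw [hNb4, card_eq_four u a p q hau.symm hpu.symm hqu.symm hpa.symm hqa.symm hpq])).symm
      refine no_small_cut G hconn hn {a, b} {u, p, q} a (by simp)
        (by simp [hau, hpa.symm, hqa.symm]) ?_ (le_trans (card_le_two a b) (by omega))
        (card_le_three u p q)
      intro x hx y hady
      simp only [Finset.mem_insert, Finset.mem_singleton] at hx
      rcases hx with rfl | rfl
      · rcases mem_quad_of_adj G x y u b p q hNa hady with rfl | rfl | rfl | rfl <;> simp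
      · rcases mem_quad_of_adj G x y u a p q hNb hady with rfl | rfl | rfl | rfl <;> simp

lemma caseI (hconn : KConnected 4 G) (hn : 8 ≤ Fintype.card V)
    (hnf : ¬ ∃ S : Set V, IsForestCut G S)
    (u a b c d xa xb : V) (hNu : G.neighborFinset u = {a, b, c, d})
    (hab : a ≠ b) (hac : a ≠ c) (had : a ≠ d) (hbc : b ≠ c) (hbd : b ≠ d) (hcd : c ≠ d)
    (hdc : G.degree c = 4)
    (hNa : G.neighborFinset a = {u, b, c, xa}) (hNb : G.neighborFinset b = {u, a, c, xb})
    (hxau : xa ≠ u) (hxaa : xa ≠ a) (hxab2 : xa ≠ b) (hxac : xa ≠ c) (hxad : xa ≠ d)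
    (hxbu : xb ≠ u) (hxba : xb ≠ a) (hxbb : xb ≠ b) (hxbc : xb ≠ c) (hxbd : xb ≠ d) :
    False := by
  have hua : G.Adj u a := adj_of_quad G u a a b c d hNu (by simp)
  have hub : G.Adj u b := adj_of_quad G u b a b c d hNu (by simp)
  have huc : G.Adj u c := adj_of_quad G u c a b c d hNu (by simp)
  have hud : G.Adj u d := adj_of_quad G u d a b c d hNu (by simp)
  have hca : G.Adj c a := (adj_of_quad G a c u b c xa hNa (by simp)).symm
  have hcb : G.Adj c b := (adj_of_quad G b c u a c xb hNb (by simp)).symm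
  have hNc4 := deg4_card G c hdc
  obtain ⟨y, hNc, hyu, hya, hyb⟩ := extract_one (G.neighborFinset c) hNc4 u a b
    (by rw [SimpleGraph.mem_neighborFinset]; exact huc.symm)
    (by rw [SimpleGraph.mem_neighborFinset]; exact hca)
    (by rw [SimpleGraph.mem_neighborFinset]; exact hcb) hua.ne hub.ne hab
  have hyc : y ≠ c := by
    intro h
    exact G.notMem_neighborFinset_self c (h ▸ (by rw [hNc]; simp : y ∈ G.neighborFinset c))
  by_cases hyd : y = d
  · -- N(c) = {u,a,b,d} : 3-cut {a,b,d}
    have hNc' : G.neighborFinset c = {u, a, b, d} := by rw [hNc, hyd]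
    refine no_small_cut G hconn hn {u, c} {a, b, d} u (by simp)
      (by simp [hua.ne, hub.ne, hud.ne]) ?_ (le_trans (card_le_two u c) (by omega))
      (card_le_three a b d)
    intro x hx y' hady
    simp only [Finset.mem_insert, Finset.mem_singleton] at hx
    rcases hx with rfl | rfl
    · rcases mem_quad_of_adj G x y' a b c d hNu hady with rfl | rfl | rfl | rfl <;> simp
    · rcases mem_quad_of_adj G x y' u a b d hNc' hady with rfl | rfl | rfl | rfl <;> simp
  · by_cases hxx : xa = xb
    · -- common neighbors u, c, xa : 3-cut
      have hNb' : G.neighborFinset b = {u, a, c, xa} := by rw [hNb, ← hxx]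
      refine no_small_cut G hconn hn {a, b} {u, c, xa} a (by simp)
        (by simp [hua.ne', hac, hxaa.symm]) ?_ (le_trans (card_le_two a b) (by omega))
        (card_le_three u c xa)
      intro x hx y' hady
      simp only [Finset.mem_insert, Finset.mem_singleton] at hx
      rcases hx with rfl | rfl
      · rcases mem_quad_of_adj G x y' u b c xa hNa hady with rfl | rfl | rfl | rfl <;> simp
      · rcases mem_quad_of_adj G x y' u a c xa hNb' hady with rfl | rfl | rfl | rfl <;> simp
    · -- 4-cut {u,c,xa,xb} around {a,b}
      have hnac : ¬ (G.induce (↑({u, c, xa, xb} : Finset V) : Set V)).IsAcyclic := by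
        refine cut_nonacyclic G hnf hn {a, b} {u, c, xa, xb} a (by simp)
          (by simp [hua.ne', hac, hxaa.symm, hxba.symm]) ?_
          (by have := card_le_two a b; have := card_le_four u c xa xb; omega)
        intro x hx y' hady
        simp only [Finset.mem_insert, Finset.mem_singleton] at hx
        rcases hx with rfl | rfl
        · rcases mem_quad_of_adj G x y' u b c xa hNa hady with rfl | rfl | rfl | rfl <;> simp
        · rcases mem_quad_of_adj G x y' u a c xb hNb hady with rfl | rfl | rfl | rfl <;> simp
      have htri := pendant_triangle G {u, c, xa, xb} u c xa xb rfl huc.ne hxau.symm hxbu.symm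
        hxac.symm hxbc.symm hxx
        (not_adj_of_quad G u xa a b c d hNu hxaa hxab2 hxac hxad)
        (not_adj_of_quad G u xb a b c d hNu hxba hxbb hxbc hxbd) hnac
      have h1 : xa = y := by
        rcases mem_quad_of_adj G c xa u a b y hNc htri.1 with h | h | h | h
        · exact absurd h hxau
        · exact absurd h hxaa
        · exact absurd h hxab2
        · exact h
      have h2 : xb = y := by
        rcases mem_quad_of_adj G c xb u a b y hNc htri.2.1 with h | h | h | h
        · exact absurd h hxbu
        · exact absurd h hxba
        · exact absurd h hxbb
        · exact h
      exact hxx (h1.trans h2.symm)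

lemma caseII (hconn : KConnected 4 G) (hn : 8 ≤ Fintype.card V)
    (hnf : ¬ ∃ S : Set V, IsForestCut G S)
    (u a b c d xa xb : V) (hNu : G.neighborFinset u = {a, b, c, d})
    (hab : a ≠ b) (hac : a ≠ c) (had : a ≠ d) (hbc : b ≠ c) (hbd : b ≠ d) (hcd : c ≠ d)
    (hdc : G.degree c = 4)
    (hNa : G.neighborFinset a = {u, b, d, xa}) (hNb : G.neighborFinset b = {u, a, d, xb})
    (hxau : xa ≠ u) (hxaa : xa ≠ a) (hxab2 : xa ≠ b) (hxac : xa ≠ c) (hxad : xa ≠ d)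
    (hxbu : xb ≠ u) (hxba : xb ≠ a) (hxbb : xb ≠ b) (hxbc : xb ≠ c) (hxbd : xb ≠ d) :
    False := by
  have hua : G.Adj u a := adj_of_quad G u a a b c d hNu (by simp)
  have hub : G.Adj u b := adj_of_quad G u b a b c d hNu (by simp)
  have huc : G.Adj u c := adj_of_quad G u c a b c d hNu (by simp)
  have hud : G.Adj u d := adj_of_quad G u d a b c d hNu (by simp)
  have hNc4 := deg4_card G c hdc
  by_cases hxx : xa = xb
  · have hNb' : G.neighborFinset b = {u, a, d, xa} := by rw [hNb, ← hxx]
    refine no_small_cut G hconn hn {a, b} {u, d, xa} a (by simp)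
      (by simp [hua.ne', had, hxaa.symm]) ?_ (le_trans (card_le_two a b) (by omega))
      (card_le_three u d xa)
    intro x hx y' hady
    simp only [Finset.mem_insert, Finset.mem_singleton] at hx
    rcases hx with rfl | rfl
    · rcases mem_quad_of_adj G x y' u b d xa hNa hady with rfl | rfl | rfl | rfl <;> simp
    · rcases mem_quad_of_adj G x y' u a d xa hNb' hady with rfl | rfl | rfl | rfl <;> simp
  · have hncb : ¬ G.Adj b c := not_adj_of_quad G b c u a d xb hNb huc.ne' hac.symm hcd hxbc.symm
    have hnca : ¬ G.Adj a c := not_adj_of_quad G a c u b d xa hNa huc.ne' hbc.symm hcd hxac.symm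
    have hnac1 : ¬ (G.induce (↑({b, d, c, xa} : Finset V) : Set V)).IsAcyclic := by
      refine cut_nonacyclic G hnf hn {u, a} {b, d, c, xa} u (by simp)
        (by simp [hub.ne, hud.ne, huc.ne, hxau.symm]) ?_
        (by have := card_le_two u a; have := card_le_four b d c xa; omega)
      intro x hx y' hady
      simp only [Finset.mem_insert, Finset.mem_singleton] at hx
      rcases hx with rfl | rfl
      · rcases mem_quad_of_adj G x y' a b c d hNu hady with rfl | rfl | rfl | rfl <;> simp
      · rcases mem_quad_of_adj G x y' u b d xa hNa hady with rfl | rfl | rfl | rfl <;> simp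
    have htri1 := pendant_triangle G {b, d, c, xa} b d c xa rfl hbd hbc hxab2.symm hcd.symm
      hxad.symm hxac.symm hncb
      (not_adj_of_quad G b xa u a d xb hNb hxau hxaa hxad hxx) hnac1
    have hnac2 : ¬ (G.induce (↑({a, d, c, xb} : Finset V) : Set V)).IsAcyclic := by
      refine cut_nonacyclic G hnf hn {u, b} {a, d, c, xb} u (by simp)
        (by simp [hua.ne, hud.ne, huc.ne, hxbu.symm]) ?_
        (by have := card_le_two u b; have := card_le_four a d c xb; omega)
      intro x hx y' hady
      simp only [Finset.mem_insert, Finset.mem_singleton] at hx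
      rcases hx with rfl | rfl
      · rcases mem_quad_of_adj G x y' a b c d hNu hady with rfl | rfl | rfl | rfl <;> simp
      · rcases mem_quad_of_adj G x y' u a d xb hNb hady with rfl | rfl | rfl | rfl <;> simp
    have htri2 := pendant_triangle G {a, d, c, xb} a d c xb rfl had hac hxba.symm hcd.symm
      hxbd.symm hxbc.symm hnca
      (not_adj_of_quad G a xb u b d xa hNa hxbu hxbb hxbd (fun h => hxx h.symm)) hnac2
    -- N(c) = {u, d, xa, xb}
    have hsub : ({u, d, xa, xb} : Finset V) ⊆ G.neighborFinset c := by
      intro x hx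
      simp only [Finset.mem_insert, Finset.mem_singleton] at hx
      rw [SimpleGraph.mem_neighborFinset]
      rcases hx with rfl | rfl | rfl | rfl
      · exact huc.symm
      · exact htri1.1.symm
      · exact htri1.2.2
      · exact htri2.2.2
    have hNc : G.neighborFinset c = {u, d, xa, xb} :=
      (Finset.eq_of_subset_of_card_le hsub (by
        rw [hNc4, card_eq_four u d xa xb hud.ne hxau.symm hxbu.symm hxad.symm hxbd.symm
          hxx])).symm
    refine no_small_cut G hconn hn {u, a, b, c} {d, xa, xb} u (by simp)
      (by simp [hud.ne, hxau.symm, hxbu.symm]) ?_ (card_le_four u a b c)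
      (card_le_three d xa xb)
    intro x hx y' hady
    simp only [Finset.mem_insert, Finset.mem_singleton] at hx
    rcases hx with rfl | rfl | rfl | rfl
    · rcases mem_quad_of_adj G x y' a b c d hNu hady with rfl | rfl | rfl | rfl <;> simp
    · rcases mem_quad_of_adj G x y' u b d xa hNa hady with rfl | rfl | rfl | rfl <;> simp
    · rcases mem_quad_of_adj G x y' u a d xb hNb hady with rfl | rfl | rfl | rfl <;> simp
    · rcases mem_quad_of_adj G x y' u d xa xb hNc hady with rfl | rfl | rfl | rfl <;> simp

lemma caseIII (hconn : KConnected 4 G) (hn : 8 ≤ Fintype.card V)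
    (hnf : ¬ ∃ S : Set V, IsForestCut G S)
    (u a b c d xa xb : V) (hNu : G.neighborFinset u = {a, b, c, d})
    (hab : a ≠ b) (hac : a ≠ c) (had : a ≠ d) (hbc : b ≠ c) (hbd : b ≠ d) (hcd : c ≠ d)
    (hdc : G.degree c = 4)
    (hNa : G.neighborFinset a = {u, b, c, xa}) (hNb : G.neighborFinset b = {u, a, d, xb})
    (hxau : xa ≠ u) (hxaa : xa ≠ a) (hxab2 : xa ≠ b) (hxac : xa ≠ c) (hxad : xa ≠ d)
    (hxbu : xb ≠ u) (hxba : xb ≠ a) (hxbb : xb ≠ b) (hxbc : xb ≠ c) (hxbd : xb ≠ d) :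
    False := by
  have hua : G.Adj u a := adj_of_quad G u a a b c d hNu (by simp)
  have hub : G.Adj u b := adj_of_quad G u b a b c d hNu (by simp)
  have huc : G.Adj u c := adj_of_quad G u c a b c d hNu (by simp)
  have hud : G.Adj u d := adj_of_quad G u d a b c d hNu (by simp)
  have hca : G.Adj c a := (adj_of_quad G a c u b c xa hNa (by simp)).symm
  have hncb : ¬ G.Adj b c := not_adj_of_quad G b c u a d xb hNb huc.ne' hac.symm hcd hxbc.symm
  have hNc4 := deg4_card G c hdc
  obtain ⟨g, e, hNcge, hge, hgu, hga, heu, hea⟩ := extract_two (G.neighborFinset c) hNc4 u a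
    (by rw [SimpleGraph.mem_neighborFinset]; exact huc.symm)
    (by rw [SimpleGraph.mem_neighborFinset]; exact hca) hua.ne
  have hgmem : g ∈ G.neighborFinset c := by rw [hNcge]; simp
  have hemem : e ∈ G.neighborFinset c := by rw [hNcge]; simp
  have hgc : g ≠ c := fun h => G.notMem_neighborFinset_self c (h ▸ hgmem)
  have hec : e ≠ c := fun h => G.notMem_neighborFinset_self c (h ▸ hemem)
  have hcg : G.Adj c g := by rwa [SimpleGraph.mem_neighborFinset] at hgmem
  have hce : G.Adj c e := by rwa [SimpleGraph.mem_neighborFinset] at hemem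
  have hgb : g ≠ b := fun h => hncb ((h ▸ hcg).symm)
  have heb : e ≠ b := fun h => hncb ((h ▸ hce).symm)
  -- d must be a neighbor of c
  have hdmem : g = d ∨ e = d := by
    by_contra hcon
    push_neg at hcon
    have hnug : ¬ G.Adj u g := not_adj_of_quad G u g a b c d hNu hga hgb hgc hcon.1
    have hnue : ¬ G.Adj u e := not_adj_of_quad G u e a b c d hNu hea heb hec hcon.2
    have hnac : ¬ (G.induce (↑({u, a, g, e} : Finset V) : Set V)).IsAcyclic := by
      refine cut_nonacyclic G hnf hn {c} {u, a, g, e} c (by simp)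
        (by simp [huc.ne', hac.symm, hgc.symm, hec.symm]) ?_
        (by have := card_le_four u a g e; simp; omega)
      intro x hx y' hady
      simp only [Finset.mem_singleton] at hx
      subst hx
      rcases mem_quad_of_adj G x y' u a g e hNcge hady with rfl | rfl | rfl | rfl <;> simp
    have htri := pendant_triangle G {u, a, g, e} u a g e rfl hua.ne hgu.symm heu.symm
      hga.symm hea.symm hge hnug hnue hnac
    have h1 : g = xa := by
      rcases mem_quad_of_adj G a g u b c xa hNa htri.1 with h | h | h | h
      · exact absurd h hgu
      · exact absurd h hgb
      · exact absurd h hgc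
      · exact h
    have h2 : e = xa := by
      rcases mem_quad_of_adj G a e u b c xa hNa htri.2.1 with h | h | h | h
      · exact absurd h heu
      · exact absurd h heb
      · exact absurd h hec
      · exact h
    exact hge (h1.trans h2.symm)
  -- extract xc with N(c) = {u, a, d, xc}
  obtain ⟨xc, hNc, hxcu, hxca, hxcb, hxcc, hxcd⟩ :
      ∃ xc, G.neighborFinset c = {u, a, d, xc} ∧ xc ≠ u ∧ xc ≠ a ∧ xc ≠ b ∧ xc ≠ c ∧ xc ≠ d := by
    rcases hdmem with h | h
    · exact ⟨e, by rw [hNcge, h], heu, hea, heb, hec, fun hh => hge ((hh.trans h.symm).symm)⟩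
    · refine ⟨g, ?_, hgu, hga, hgb, hgc, fun hh => hge (hh.trans h.symm)⟩
      rw [hNcge, h]; exact quad_perm_swap34 u a g d
  by_cases hxx : xa = xb
  · refine no_small_cut G hconn hn {u, a, b} {c, d, xa} u (by simp)
      (by simp [huc.ne, hud.ne, hxau.symm]) ?_ (le_trans (card_le_three u a b) (by omega))
      (card_le_three c d xa)
    have hNb' : G.neighborFinset b = {u, a, d, xa} := by rw [hNb, ← hxx]
    intro x hx y' hady
    simp only [Finset.mem_insert, Finset.mem_singleton] at hx
    rcases hx with rfl | rfl | rfl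
    · rcases mem_quad_of_adj G x y' a b c d hNu hady with rfl | rfl | rfl | rfl <;> simp
    · rcases mem_quad_of_adj G x y' u b c xa hNa hady with rfl | rfl | rfl | rfl <;> simp
    · rcases mem_quad_of_adj G x y' u a d xa hNb' hady with rfl | rfl | rfl | rfl <;> simp
  · by_cases hxx2 : xa = xc
    · refine no_small_cut G hconn hn {u, a, c} {b, d, xa} u (by simp)
        (by simp [hub.ne, hud.ne, hxau.symm]) ?_ (le_trans (card_le_three u a c) (by omega))
        (card_le_three b d xa)
      have hNc' : G.neighborFinset c = {u, a, d, xa} := by rw [hNc, ← hxx2]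
      intro x hx y' hady
      simp only [Finset.mem_insert, Finset.mem_singleton] at hx
      rcases hx with rfl | rfl | rfl
      · rcases mem_quad_of_adj G x y' a b c d hNu hady with rfl | rfl | rfl | rfl <;> simp
      · rcases mem_quad_of_adj G x y' u b c xa hNa hady with rfl | rfl | rfl | rfl <;> simp
      · rcases mem_quad_of_adj G x y' u a d xa hNc' hady with rfl | rfl | rfl | rfl <;> simp
    · have hnac : ¬ (G.induce (↑({b, d, c, xa} : Finset V) : Set V)).IsAcyclic := by
        refine cut_nonacyclic G hnf hn {u, a} {b, d, c, xa} u (by simp)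
          (by simp [hub.ne, hud.ne, huc.ne, hxau.symm]) ?_
          (by have := card_le_two u a; have := card_le_four b d c xa; omega)
        intro x hx y' hady
        simp only [Finset.mem_insert, Finset.mem_singleton] at hx
        rcases hx with rfl | rfl
        · rcases mem_quad_of_adj G x y' a b c d hNu hady with rfl | rfl | rfl | rfl <;> simp
        · rcases mem_quad_of_adj G x y' u b c xa hNa hady with rfl | rfl | rfl | rfl <;> simp
      have htri := pendant_triangle G {b, d, c, xa} b d c xa rfl hbd hbc hxab2.symm hcd.symm
        hxad.symm hxac.symm hncb
        (not_adj_of_quad G b xa u a d xb hNb hxau hxaa hxad hxx) hnac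
      have h1 : xa = xc := by
        rcases mem_quad_of_adj G c xa u a d xc hNc htri.2.2 with h | h | h | h
        · exact absurd h hxau
        · exact absurd h hxaa
        · exact absurd h hxad
        · exact h
      exact hxx2 h1

lemma quad_perm (a b c d p q r s : V)
    (h : ∀ t : V, (t = a ∨ t = b ∨ t = c ∨ t = d) ↔ (t = p ∨ t = q ∨ t = r ∨ t = s)) :
    ({a, b, c, d} : Finset V) = {p, q, r, s} := by
  ext t
  simp only [Finset.mem_insert, Finset.mem_singleton]
  exact h t

lemma quad_perm_acbd (a b c d : V) : ({a, b, c, d} : Finset V) = {a, c, b, d} := by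
  ext t; simp only [Finset.mem_insert, Finset.mem_singleton]; tauto

lemma quad_perm_bacd (a b c d : V) : ({a, b, c, d} : Finset V) = {b, a, c, d} := by
  ext t; simp only [Finset.mem_insert, Finset.mem_singleton]; tauto

lemma quad_perm_bcad (a b c d : V) : ({a, b, c, d} : Finset V) = {b, c, a, d} := by
  ext t; simp only [Finset.mem_insert, Finset.mem_singleton]; tauto

lemma quad_perm_cabd (a b c d : V) : ({a, b, c, d} : Finset V) = {c, a, b, d} := by
  ext t; simp only [Finset.mem_insert, Finset.mem_singleton]; tauto

lemma quad_perm_cbad (a b c d : V) : ({a, b, c, d} : Finset V) = {c, b, a, d} := by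
  ext t; simp only [Finset.mem_insert, Finset.mem_singleton]; tauto

lemma key (hconn : KConnected 4 G) (hn : 8 ≤ Fintype.card V)
    (hnf : ¬ ∃ S : Set V, IsForestCut G S)
    (u a b c d : V) (hNu : G.neighborFinset u = {a, b, c, d})
    (hab : a ≠ b) (hac : a ≠ c) (had : a ≠ d) (hbc : b ≠ c) (hbd : b ≠ d) (hcd : c ≠ d)
    (hda : G.degree a = 4) (hdb : G.degree b = 4) (hdc : G.degree c = 4)
    (hAB : G.Adj a b) : False := by
  obtain ⟨m, xa, hNa, hm, hxau, hxaa, hxab2, hxac, hxad⟩ :=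
    stepB G hconn hn hnf u a b c d hNu hab hac had hbc hbd hcd hda hdb hAB
  have hNu2 : G.neighborFinset u = {b, a, c, d} := by
    rw [hNu]; exact quad_perm_bacd a b c d
  obtain ⟨m', xb, hNb, hm', hxbu, hxbb, hxba, hxbc, hxbd⟩ :=
    stepB G hconn hn hnf u b a c d hNu2 hab.symm hbc hbd hac had hcd hdb hda hAB.symm
  rcases hm with hm1 | hm1 <;> rcases hm' with hm2 | hm2
  · -- m = c, m' = c
    exact caseI G hconn hn hnf u a b c d xa xb hNu hab hac had hbc hbd hcd hdc
      (by rw [hNa, hm1]) (by rw [hNb, hm2]) hxau hxaa hxab2 hxac hxad hxbu hxba hxbb hxbc hxbd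
  · -- m = c, m' = d : caseIII with roles (a,b)
    exact caseIII G hconn hn hnf u a b c d xa xb hNu hab hac had hbc hbd hcd hdc
      (by rw [hNa, hm1]) (by rw [hNb, hm2]) hxau hxaa hxab2 hxac hxad hxbu hxba hxbb hxbc hxbd
  · -- m = d, m' = c : caseIII with roles (b,a)
    exact caseIII G hconn hn hnf u b a c d xb xa hNu2 hab.symm hbc hbd hac had hcd hdc
      (by rw [hNb, hm2]) (by rw [hNa, hm1]) hxbu hxbb hxba hxbc hxbd hxau hxab2 hxaa hxac hxad
  · -- m = d, m' = d
    exact caseII G hconn hn hnf u a b c d xa xb hNu hab hac had hbc hbd hcd hdc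
      (by rw [hNa, hm1]) (by rw [hNb, hm2]) hxau hxaa hxab2 hxac hxad hxbu hxba hxbb hxbc hxbd

theorem main_result (hconn : KConnected 4 G) (hn : 8 ≤ Fintype.card V)
    (hnf : ¬ ∃ S : Set V, IsForestCut G S)
    (u : V) (hu : G.degree u = 4) :
    ((G.neighborFinset u).filter (fun v => G.degree v = 4)).card ≤ 2 := by
  by_contra hcon
  push_neg at hcon
  have h3 : 3 ≤ ((G.neighborFinset u).filter (fun v => G.degree v = 4)).card := hcon
  obtain ⟨t, hts, htc⟩ :=
    Finset.exists_subset_card_eq h3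
  obtain ⟨a, b, c, hab, hac, hbc, ht⟩ := Finset.card_eq_three.1 htc
  have hma : a ∈ (G.neighborFinset u).filter (fun v => G.degree v = 4) := hts (by rw [ht]; simp)
  have hmb : b ∈ (G.neighborFinset u).filter (fun v => G.degree v = 4) := hts (by rw [ht]; simp)
  have hmc : c ∈ (G.neighborFinset u).filter (fun v => G.degree v = 4) := hts (by rw [ht]; simp)
  simp only [Finset.mem_filter, SimpleGraph.mem_neighborFinset] at hma hmb hmc
  have hda : G.degree a = 4 := hma.2
  have hdb : G.degree b = 4 := hmb.2
  have hdc : G.degree c = 4 := hmc.2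
  have hNu4 := deg4_card G u hu
  obtain ⟨d, hNu, hdna, hdnb, hdnc⟩ := extract_one (G.neighborFinset u) hNu4 a b c
    (by rw [SimpleGraph.mem_neighborFinset]; exact hma.1)
    (by rw [SimpleGraph.mem_neighborFinset]; exact hmb.1)
    (by rw [SimpleGraph.mem_neighborFinset]; exact hmc.1) hab hac hbc
  have had : a ≠ d := hdna.symm
  have hbd : b ≠ d := hdnb.symm
  have hcd : c ≠ d := hdnc.symm
  have hnac : ¬ (G.induce (↑(G.neighborFinset u) : Set V)).IsAcyclic := by
    refine cut_nonacyclic G hnf hn {u} (G.neighborFinset u) u (by simp)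
      (G.notMem_neighborFinset_self u) ?_ (by simp [hNu4])
    intro x hx y hady
    simp only [Finset.mem_singleton] at hx
    subst hx
    right
    rwa [SimpleGraph.mem_neighborFinset]
  obtain ⟨x, y, hxS, hyS, hxd, hyd, hxy, hadj⟩ :=
    exists_edge_avoiding G (G.neighborFinset u) (le_of_eq hNu4) d hnac
  rw [hNu] at hxS hyS
  simp only [Finset.mem_insert, Finset.mem_singleton] at hxS hyS
  have hxS' : x = a ∨ x = b ∨ x = c := by
    rcases hxS with h | h | h | h
    · exact Or.inl h
    · exact Or.inr (Or.inl h)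
    · exact Or.inr (Or.inr h)
    · exact absurd h hxd
  have hyS' : y = a ∨ y = b ∨ y = c := by
    rcases hyS with h | h | h | h
    · exact Or.inl h
    · exact Or.inr (Or.inl h)
    · exact Or.inr (Or.inr h)
    · exact absurd h hyd
  rcases hxS' with hx1 | hx1 | hx1 <;> rcases hyS' with hy1 | hy1 | hy1
  · exact hxy (hx1.trans hy1.symm)
  · exact key G hconn hn hnf u a b c d hNu hab hac had hbc hbd hcd hda hdb hdc
      (by subst hx1; subst hy1; exact hadj)
  · exact key G hconn hn hnf u a c b d
      (by rw [hNu]; exact quad_perm_acbd a b c d)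
      hac hab had hbc.symm hcd hbd hda hdc hdb (by subst hx1; subst hy1; exact hadj)
  · exact key G hconn hn hnf u b a c d
      (by rw [hNu]; exact quad_perm_bacd a b c d)
      hab.symm hbc hbd hac had hcd hdb hda hdc (by subst hx1; subst hy1; exact hadj)
  · exact hxy (hx1.trans hy1.symm)
  · exact key G hconn hn hnf u b c a d
      (by rw [hNu]; exact quad_perm_bcad a b c d)
      hbc hab.symm hbd hac.symm hcd had hdb hdc hda (by subst hx1; subst hy1; exact hadj)
  · exact key G hconn hn hnf u c a b d
      (by rw [hNu]; exact quad_perm_cabd a b c d)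
      hac.symm hbc.symm hcd hab had hbd hdc hda hdb (by subst hx1; subst hy1; exact hadj)
  · exact key G hconn hn hnf u c b a d
      (by rw [hNu]; exact quad_perm_cbad a b c d)
      hbc.symm hac.symm hcd hab.symm hbd had hdc hdb hda (by subst hx1; subst hy1; exact hadj)
  · exact hxy (hx1.trans hy1.symm)

end ForestCutProof

/-- In a `4`-connected graph of order at least `8` with no forest cut, every vertex of
degree `4` has at most two neighbors of degree `4`. -/
theorem degree_four_vertex_has_at_most_two_degree_four_neighbors
    {V : Type*} [Fintype V] [DecidableEq V] (G : SimpleGraph V) [DecidableRel G.Adj]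
    (hconn : KConnected 4 G) (hn : 8 ≤ Fintype.card V)
    (hnf : ¬ ∃ S : Set V, IsForestCut G S)
    (u : V) (hu : G.degree u = 4) :
    ((G.neighborFinset u).filter (fun v => G.degree v = 4)).card ≤ 2 :=
  ForestCutProof.main_result G hconn hn hnf u hu
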